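/- For every p with 2 ≤ p < ∞ there are constants c_0, c_1 > 0 such that for all integers n, M, N with 1 ≤ n ≤ c_0·min(M,N), every randomized algorithm using n function values for computing the mean S_N on B_∞^N(L_p^M) (with outputs in L_p^M, error measured in the L_p^M norm) has worst-case expected error at least c_1 · n^{−1/2}. -/

import Mathlib

set_option maxHeartbeats 1600000

/-- The normalized `L_p^M` norm on `ℝ^M`: `‖x‖ = ((1/M) ∑ i, |x i|^p)^(1/p)`. -/
noncomputable def lpNorm (p : ℝ) (M : ℕ) (x : Fin M → ℝ) : ℝ :=
  ((M : ℝ)⁻¹ * ∑ i, |x i| ^ p) ^ (1 / p)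

namespace MeanLB

def sgn (b : Bool) : ℝ := if b then 1 else -1

noncomputable def rho (δ : ℝ) (b : Bool) : ℝ := if b then 1/2 + δ else 1/2 - δ

@[simp] lemma sgn_true : sgn true = 1 := rfl
@[simp] lemma sgn_false : sgn false = -1 := rfl
lemma sgn_abs (b : Bool) : |sgn b| = 1 := by cases b <;> simp [sgn]
lemma sgn_not (b : Bool) : sgn (!b) = - sgn b := by cases b <;> simp
lemma rho_not (δ : ℝ) (b : Bool) : rho δ (!b) = rho (-δ) b := by
  cases b <;> simp [rho] <;> ring
lemma rho_add (δ : ℝ) : rho δ true + rho δ false = 1 := by simp [rho]; ring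
lemma rho_pos {δ : ℝ} (h1 : -(1/2) < δ) (h2 : δ < 1/2) (b : Bool) : 0 < rho δ b := by
  cases b <;> (simp [rho]; linarith)
lemma rho_nonneg {δ : ℝ} (h1 : -(1/2) ≤ δ) (h2 : δ ≤ 1/2) (b : Bool) : 0 ≤ rho δ b := by
  cases b <;> (simp [rho]; linarith)

lemma univ_eq {α : Type*} (i1 i2 : Fintype α) :
    @Finset.univ α i1 = @Finset.univ α i2 := by
  congr!

lemma sum_prod_bool' {κ : Type*} [Fintype κ] [DecidableEq κ] (h : κ → Bool → ℝ) :
    ∑ z : κ → Bool, ∏ j, h j (z j) = ∏ j, (h j true + h j false) := by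
  rw [← Fintype.prod_sum]
  exact Finset.prod_congr rfl fun j _ => by rw [Fintype.sum_bool]

lemma sum_w {ι : Type*} [Fintype ι] [DecidableEq ι] (δ : ℝ) :
    ∑ x : ι → Bool, ∏ j, rho δ (x j) = 1 := by
  rw [sum_prod_bool']
  rw [Finset.prod_congr rfl fun j _ => rho_add δ, Finset.prod_const_one]

lemma marginalize {ι : Type*} [Fintype ι] [DecidableEq ι] (J : Finset ι)
    (g : ι → Bool → ℝ) (hg : ∀ j, j ∉ J → g j true + g j false = 1)
    (F : (ι → Bool) → ℝ) (hF : ∀ x x' : ι → Bool, (∀ j ∈ J, x j = x' j) → F x = F x') :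
    ∑ x : ι → Bool, (∏ j, g j (x j)) * F x
      = ∑ y : {j // j ∈ J} → Bool,
          (∏ j : {j // j ∈ J}, g j (y j)) *
            F (fun j => if h : j ∈ J then y ⟨j, h⟩ else false) := by
  classical
  set e := (Equiv.piEquivPiSubtypeProd (fun j => j ∈ J) (fun _ => Bool)).symm with he
  rw [← Equiv.sum_comp e (fun x => (∏ j, g j (x j)) * F x)]
  rw [Fintype.sum_prod_type]
  refine Finset.sum_congr (univ_eq _ _) fun y _ => ?_
  have hey : ∀ (z : {j // ¬ j ∈ J} → Bool) (j : ι) (h : j ∈ J), e (y, z) j = y ⟨j, h⟩ := by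
    intro z j h
    simp [he, Equiv.piEquivPiSubtypeProd, h]
  have hez : ∀ (z : {j // ¬ j ∈ J} → Bool) (j : ι) (h : ¬ j ∈ J), e (y, z) j = z ⟨j, h⟩ := by
    intro z j h
    simp [he, Equiv.piEquivPiSubtypeProd, h]
  have hFy : ∀ z : {j // ¬ j ∈ J} → Bool,
      F (e (y, z)) = F (fun j => if h : j ∈ J then y ⟨j, h⟩ else false) := by
    intro z
    apply hF
    intro j hj
    rw [hey z j hj]
    simp [hj]
  have hzsum : (∑ z : {j // ¬ j ∈ J} → Bool, ∏ j : {j // ¬ j ∈ J}, g j (z j)) = 1 := by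
    rw [sum_prod_bool' (fun (j : {j // ¬ j ∈ J}) b => g j b)]
    rw [Finset.prod_congr rfl fun (j : {j // ¬ j ∈ J}) _ => hg j j.2,
      Finset.prod_const_one]
  have hprod : ∀ z : {j // ¬ j ∈ J} → Bool, (∏ j, g j (e (y, z) j))
      = (∏ j : {j // j ∈ J}, g j (y j)) * (∏ j : {j // ¬ j ∈ J}, g j (z j)) := by
    intro z
    rw [← Fintype.prod_subtype_mul_prod_subtype (fun j => j ∈ J)
      (fun j => g j (e (y, z) j))]
    congr 1
    · exact Finset.prod_congr (univ_eq _ _) fun j _ => by rw [hey z j j.2]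
    · exact Finset.prod_congr (univ_eq _ _) fun j _ => by rw [hez z j j.2]
  calc (∑ z : {j // ¬ j ∈ J} → Bool, (∏ j, g j (e (y, z) j)) * F (e (y, z)))
      = ∑ z : {j // ¬ j ∈ J} → Bool,
          ((∏ j : {j // j ∈ J}, g j (y j)) *
            F (fun j => if h : j ∈ J then y ⟨j, h⟩ else false)) *
          (∏ j : {j // ¬ j ∈ J}, g j (z j)) := by
        refine Finset.sum_congr (univ_eq _ _) fun z _ => ?_
        rw [hprod z, hFy z]; ring
    _ = ((∏ j : {j // j ∈ J}, g j (y j)) *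
          F (fun j => if h : j ∈ J then y ⟨j, h⟩ else false)) *
          ∑ z : {j // ¬ j ∈ J} → Bool, ∏ j : {j // ¬ j ∈ J}, g j (z j) := by
        rw [← Finset.mul_sum]
    _ = _ := by rw [hzsum, mul_one]


lemma tv_bound {ι : Type*} [Fintype ι] [DecidableEq ι] {δ : ℝ} (hδ0 : 0 ≤ δ)
    (hδ : δ^2 ≤ 1/8) :
    ∑ y : ι → Bool, |(∏ j, rho δ (y j)) - ∏ j, rho (-δ) (y j)|
      ≤ Real.sqrt ((1 + 32*δ^2) ^ (Fintype.card ι) - 1) := by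
  have hδhalf : δ < 1/2 := by nlinarith
  have hP : ∀ y : ι → Bool, 0 < ∏ j, rho δ (y j) :=
    fun y => Finset.prod_pos fun j _ => rho_pos (by linarith) hδhalf _
  set P : (ι → Bool) → ℝ := fun y => ∏ j, rho δ (y j) with hPdef
  set Q : (ι → Bool) → ℝ := fun y => ∏ j, rho (-δ) (y j) with hQdef
  have hsumP : ∑ y, P y = 1 := sum_w δ
  have hsumQ : ∑ y, Q y = 1 := sum_w (-δ)
  -- the chi-square quantity
  have hchi : ∑ y, (Q y)^2 / P y
      = ((1/2+δ)^2/(1/2-δ) + (1/2-δ)^2/(1/2+δ)) ^ (Fintype.card ι) := by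
    have : ∀ y : ι → Bool, (Q y)^2 / P y = ∏ j, ((rho (-δ) (y j))^2 / rho δ (y j)) := by
      intro y
      rw [Finset.prod_div_distrib, Finset.prod_pow]
    rw [Finset.sum_congr rfl fun y _ => this y]
    rw [sum_prod_bool' (fun j b => (rho (-δ) b)^2 / rho δ b)]
    have hterm : ∀ j : ι, ((rho (-δ) true)^2 / rho δ true + (rho (-δ) false)^2 / rho δ false)
        = ((1/2+δ)^2/(1/2-δ) + (1/2-δ)^2/(1/2+δ)) := by
      intro j
      simp [rho]
      ring
    rw [Finset.prod_congr rfl fun j _ => hterm j, Finset.prod_const, Finset.card_univ]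
  have hkap : (1/2+δ)^2/(1/2-δ) + (1/2-δ)^2/(1/2+δ) ≤ 1 + 32*δ^2 := by
    have h1 : (0:ℝ) < 1/2 - δ := by linarith
    have h2 : (0:ℝ) < 1/2 + δ := by linarith
    rw [div_add_div _ _ (ne_of_gt h1) (ne_of_gt h2), div_le_iff₀ (by positivity)]
    nlinarith
  have hkap0 : (0:ℝ) ≤ (1/2+δ)^2/(1/2-δ) + (1/2-δ)^2/(1/2+δ) := by
    have h1 : (0:ℝ) < 1/2 - δ := by linarith
    have h2 : (0:ℝ) < 1/2 + δ := by linarith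
    positivity
  -- Cauchy–Schwarz
  have hCS : (∑ y, |P y - Q y|)^2 ≤ (∑ y, P y) * (∑ y, (P y - Q y)^2 / P y) := by
    have := Finset.sum_mul_sq_le_sq_mul_sq Finset.univ
      (fun y : ι → Bool => Real.sqrt (P y))
      (fun y : ι → Bool => |P y - Q y| / Real.sqrt (P y))
    have heq1 : ∀ y : ι → Bool,
        Real.sqrt (P y) * (|P y - Q y| / Real.sqrt (P y)) = |P y - Q y| := by
      intro y
      rw [mul_div_cancel₀]
      exact ne_of_gt (Real.sqrt_pos.2 (hP y))
    have heq2 : ∀ y : ι → Bool, (Real.sqrt (P y))^2 = P y :=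
      fun y => Real.sq_sqrt (hP y).le
    have heq3 : ∀ y : ι → Bool,
        (|P y - Q y| / Real.sqrt (P y))^2 = (P y - Q y)^2 / P y := by
      intro y
      rw [div_pow, sq_abs, heq2]
    calc (∑ y, |P y - Q y|)^2
        = (∑ y, Real.sqrt (P y) * (|P y - Q y| / Real.sqrt (P y)))^2 := by
          rw [Finset.sum_congr rfl fun y _ => (heq1 y)]
      _ ≤ (∑ y, (Real.sqrt (P y))^2) * (∑ y, (|P y - Q y| / Real.sqrt (P y))^2) := this
      _ = (∑ y, P y) * (∑ y, (P y - Q y)^2 / P y) := by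
          rw [Finset.sum_congr rfl fun y _ => (heq2 y),
            Finset.sum_congr rfl fun y _ => (heq3 y)]
  have hexpand : ∑ y, (P y - Q y)^2 / P y
      = (∑ y, (Q y)^2 / P y) - 1 := by
    have : ∀ y : ι → Bool, (P y - Q y)^2 / P y = P y - 2 * Q y + (Q y)^2 / P y := by
      intro y
      have : P y ≠ 0 := (hP y).ne'
      rw [show (P y - Q y)^2 = P y * (P y - 2 * Q y) + (Q y)^2 by ring, add_div,
        mul_div_cancel_left₀ _ this]
    rw [Finset.sum_congr rfl fun y _ => this y]
    rw [Finset.sum_add_distrib, Finset.sum_sub_distrib, hsumP, ← Finset.mul_sum, hsumQ]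
    ring
  have hbound : (∑ y, |P y - Q y|)^2 ≤ (1 + 32*δ^2) ^ (Fintype.card ι) - 1 := by
    rw [hsumP, one_mul, hexpand, hchi] at hCS
    have := pow_le_pow_left₀ hkap0 hkap (Fintype.card ι)
    linarith
  have habs : 0 ≤ ∑ y, |P y - Q y| := Finset.sum_nonneg fun y _ => abs_nonneg _
  calc ∑ y, |P y - Q y| = Real.sqrt ((∑ y, |P y - Q y|)^2) := (Real.sqrt_sq habs).symm
    _ ≤ Real.sqrt ((1 + 32*δ^2) ^ (Fintype.card ι) - 1) := Real.sqrt_le_sqrt hbound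


-- orthogonality: second moment of centered Rademacher-like sums
lemma moment2 {N : ℕ} {δ : ℝ} (hδ0 : 0 ≤ δ) (hδ : δ ≤ 1/2) (j k : Fin N) :
    ∑ x : Fin N → Bool, (∏ l, rho δ (x l)) * ((sgn (x j) - 2*δ) * (sgn (x k) - 2*δ))
      = if j = k then 1 - 4*δ^2 else 0 := by
  classical
  have hident : ∀ x : Fin N → Bool,
      (∏ l, rho δ (x l)) * ((sgn (x j) - 2*δ) * (sgn (x k) - 2*δ))
      = ∏ l, (rho δ (x l) * ((if l = j then sgn (x l) - 2*δ else 1)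
          * (if l = k then sgn (x l) - 2*δ else 1))) := by
    intro x
    rw [Finset.prod_mul_distrib, Finset.prod_mul_distrib]
    rw [Finset.prod_ite_eq' Finset.univ j (fun l => sgn (x l) - 2*δ),
      Finset.prod_ite_eq' Finset.univ k (fun l => sgn (x l) - 2*δ)]
    simp
  rw [Finset.sum_congr rfl fun x _ => hident x]
  rw [sum_prod_bool' (fun l b => rho δ b * ((if l = j then sgn b - 2*δ else 1)
      * (if l = k then sgn b - 2*δ else 1)))]
  by_cases hjk : j = k
  · subst hjk
    simp only [if_pos rfl]
    rw [Finset.prod_eq_single j]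
    · simp only [if_pos rfl]
      simp [rho, sgn]
      ring
    · intro l _ hl
      simp only [if_neg hl, mul_one]
      linarith [rho_add δ]
    · simp
  · rw [if_neg hjk]
    apply Finset.prod_eq_zero (Finset.mem_univ j)
    simp only [if_pos rfl, if_neg hjk]
    simp [rho, sgn]
    ring

lemma variance_bound {N : ℕ} (hN : 1 ≤ N) {δ : ℝ} (hδ0 : 0 ≤ δ) (hδ : δ ≤ 1/2) :
    ∑ x : Fin N → Bool, (∏ j, rho δ (x j)) * |(N:ℝ)⁻¹ * (∑ j, sgn (x j)) - 2*δ|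
      ≤ Real.sqrt ((N:ℝ)⁻¹) := by
  classical
  have hN0 : (0:ℝ) < N := by exact_mod_cast hN
  set w : (Fin N → Bool) → ℝ := fun x => ∏ j, rho δ (x j) with hwdef
  have hw0 : ∀ x, 0 ≤ w x :=
    fun x => Finset.prod_nonneg fun j _ => rho_nonneg (by linarith) hδ _
  set Z : (Fin N → Bool) → ℝ := fun x => (N:ℝ)⁻¹ * (∑ j, sgn (x j)) - 2*δ with hZdef
  have hsumw : ∑ x, w x = 1 := sum_w δ
  -- second moment
  have hZalt : ∀ x, Z x = (N:ℝ)⁻¹ * ∑ j, (sgn (x j) - 2*δ) := by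
    intro x
    rw [Finset.sum_sub_distrib, Finset.sum_const, Finset.card_univ, Fintype.card_fin,
      nsmul_eq_mul]
    rw [hZdef]
    field_simp
  have hm2 : ∑ x, w x * (Z x)^2 ≤ (N:ℝ)⁻¹ := by
    have hexp : ∀ x, w x * (Z x)^2 = (N:ℝ)⁻¹^2 *
        ∑ j, ∑ k, (w x * ((sgn (x j) - 2*δ) * (sgn (x k) - 2*δ))) := by
      intro x
      have hmulsum : ∀ j : Fin N, w x * ∑ k, ((sgn (x j) - 2*δ) * (sgn (x k) - 2*δ))
          = ∑ k, w x * ((sgn (x j) - 2*δ) * (sgn (x k) - 2*δ)) :=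
        fun j => Finset.mul_sum _ _ _
      calc w x * (Z x)^2
          = (N:ℝ)⁻¹^2 * (w x * ∑ j, ∑ k, ((sgn (x j) - 2*δ) * (sgn (x k) - 2*δ))) := by
            rw [hZalt x, mul_pow, pow_two (∑ j, (sgn (x j) - 2*δ)), Finset.sum_mul_sum]
            ring
        _ = (N:ℝ)⁻¹^2 * ∑ j, (w x * ∑ k, ((sgn (x j) - 2*δ) * (sgn (x k) - 2*δ))) := by
            rw [Finset.mul_sum]
        _ = (N:ℝ)⁻¹^2 * ∑ j, ∑ k, (w x * ((sgn (x j) - 2*δ) * (sgn (x k) - 2*δ))) := by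
            rw [Finset.sum_congr rfl fun j _ => hmulsum j]
    rw [Finset.sum_congr rfl fun x _ => hexp x]
    rw [← Finset.mul_sum]
    have hDsum : ∑ x : Fin N → Bool, ∑ j, ∑ k,
        (w x * ((sgn (x j) - 2*δ) * (sgn (x k) - 2*δ)))
        = ∑ j : Fin N, (1 - 4*δ^2) := by
      rw [Finset.sum_comm]
      refine Finset.sum_congr rfl fun j _ => ?_
      rw [Finset.sum_comm]
      have : ∀ k : Fin N, ∑ x : Fin N → Bool,
          (w x * ((sgn (x j) - 2*δ) * (sgn (x k) - 2*δ)))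
          = if j = k then 1 - 4*δ^2 else 0 := fun k => moment2 hδ0 hδ j k
      rw [Finset.sum_congr rfl fun k _ => this k]
      simp
    rw [hDsum]
    rw [Finset.sum_const, Finset.card_univ, Fintype.card_fin, nsmul_eq_mul]
    have h4 : 1 - 4*δ^2 ≤ 1 := by nlinarith
    have : (N:ℝ)⁻¹^2 * ((N:ℝ) * (1 - 4*δ^2)) ≤ (N:ℝ)⁻¹^2 * ((N:ℝ) * 1) := by
      apply mul_le_mul_of_nonneg_left _ (by positivity)
      apply mul_le_mul_of_nonneg_left h4 (by positivity)
    calc (N:ℝ)⁻¹^2 * ((N:ℝ) * (1 - 4*δ^2)) ≤ (N:ℝ)⁻¹^2 * ((N:ℝ) * 1) := this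
      _ = (N:ℝ)⁻¹ := by field_simp
  -- Cauchy–Schwarz
  have hCS : (∑ x, w x * |Z x|)^2 ≤ (∑ x, w x) * (∑ x, w x * (Z x)^2) := by
    have := Finset.sum_mul_sq_le_sq_mul_sq Finset.univ
      (fun x : Fin N → Bool => Real.sqrt (w x))
      (fun x : Fin N → Bool => Real.sqrt (w x) * |Z x|)
    have heq1 : ∀ x : Fin N → Bool,
        Real.sqrt (w x) * (Real.sqrt (w x) * |Z x|) = w x * |Z x| := by
      intro x
      rw [← mul_assoc, Real.mul_self_sqrt (hw0 x)]
    have heq2 : ∀ x : Fin N → Bool, (Real.sqrt (w x))^2 = w x :=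
      fun x => Real.sq_sqrt (hw0 x)
    have heq3 : ∀ x : Fin N → Bool, (Real.sqrt (w x) * |Z x|)^2 = w x * (Z x)^2 := by
      intro x
      rw [mul_pow, Real.sq_sqrt (hw0 x), sq_abs]
    calc (∑ x, w x * |Z x|)^2
        = (∑ x, Real.sqrt (w x) * (Real.sqrt (w x) * |Z x|))^2 := by
          rw [Finset.sum_congr rfl fun x _ => heq1 x]
      _ ≤ (∑ x, (Real.sqrt (w x))^2) * (∑ x, (Real.sqrt (w x) * |Z x|)^2) := this
      _ = (∑ x, w x) * (∑ x, w x * (Z x)^2) := by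
          rw [Finset.sum_congr rfl fun x _ => heq2 x,
            Finset.sum_congr rfl fun x _ => heq3 x]
  rw [hsumw, one_mul] at hCS
  have hnn : 0 ≤ ∑ x, w x * |Z x| :=
    Finset.sum_nonneg fun x _ => mul_nonneg (hw0 x) (abs_nonneg _)
  calc ∑ x, w x * |Z x| = Real.sqrt ((∑ x, w x * |Z x|)^2) := (Real.sqrt_sq hnn).symm
    _ ≤ Real.sqrt ((N:ℝ)⁻¹) := Real.sqrt_le_sqrt (le_trans hCS hm2)


lemma abs_le_lpNorm {p : ℝ} (hp : 1 ≤ p) {M : ℕ} (hM : 1 ≤ M) (c : ℝ) (v : Fin M → ℝ) :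
    |c - (M:ℝ)⁻¹ * ∑ i, v i| ≤ lpNorm p M (fun i => c - v i) := by
  have hM0 : (0:ℝ) < M := by exact_mod_cast hM
  have hsum1 : ∑ _i : Fin M, (M:ℝ)⁻¹ = 1 := by
    rw [Finset.sum_const, Finset.card_univ, Fintype.card_fin, nsmul_eq_mul]
    field_simp
  have h1 : c - (M:ℝ)⁻¹ * ∑ i, v i = ∑ i, (M:ℝ)⁻¹ * (c - v i) := by
    rw [← Finset.mul_sum, Finset.sum_sub_distrib, Finset.sum_const, Finset.card_univ,
      Fintype.card_fin, nsmul_eq_mul]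
    field_simp
  calc |c - (M:ℝ)⁻¹ * ∑ i, v i| = |∑ i, (M:ℝ)⁻¹ * (c - v i)| := by rw [h1]
    _ ≤ ∑ i, |(M:ℝ)⁻¹ * (c - v i)| := Finset.abs_sum_le_sum_abs _ _
    _ = ∑ i, (M:ℝ)⁻¹ * |c - v i| := by
        refine Finset.sum_congr rfl fun i _ => ?_
        rw [abs_mul, abs_of_nonneg (by positivity : (0:ℝ) ≤ (M:ℝ)⁻¹)]
    _ ≤ (∑ i, (M:ℝ)⁻¹ * |c - v i| ^ p) ^ (1/p) := by
        refine Real.arith_mean_le_rpow_mean Finset.univ _ _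
          (fun i _ => by positivity) hsum1 (fun i _ => abs_nonneg _) hp
    _ = lpNorm p M (fun i => c - v i) := by rw [lpNorm, Finset.mul_sum]

lemma pointwise_min (P Q a d : ℝ) (hP : 0 ≤ P) (hQ : 0 ≤ Q) (hd : 0 ≤ d) :
    2*d*(P - |P - Q|) ≤ P * |d - a| + Q * |d + a| := by
  have h1 : 2*d ≤ |d - a| + |d + a| := by
    have h := abs_add_le (d - a) (d + a)
    have h2 : |d - a + (d + a)| = 2*d := by
      rw [show d - a + (d + a) = 2*d by ring, abs_of_nonneg (by linarith)]
    linarith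
  have ha1 : 0 ≤ |d - a| := abs_nonneg _
  have ha2 : 0 ≤ |d + a| := abs_nonneg _
  rcases le_total P Q with h | h
  · have habs : |P - Q| = Q - P := by rw [abs_of_nonpos (by linarith)]; ring
    rw [habs]
    nlinarith
  · have habs : |P - Q| = P - Q := abs_of_nonneg (by linarith)
    rw [habs]
    nlinarith

lemma tv_numeric (n m : ℕ) (hn : 1 ≤ n) (hm : (m:ℝ) ≤ n) {δ : ℝ}
    (hδ2 : δ^2 = (160*(n:ℝ))⁻¹) :
    Real.sqrt ((1 + 32*δ^2) ^ m - 1) ≤ 1/2 := by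
  have hn0 : (0:ℝ) < n := by exact_mod_cast hn
  have hn1 : (1:ℝ) ≤ n := by exact_mod_cast hn
  have hδ2' : δ^2 = (160*(n:ℝ))⁻¹ := hδ2
  have hδ2pos : 0 ≤ δ^2 := sq_nonneg δ
  have h1 : (1 + 32*δ^2) ^ m ≤ Real.exp (32*δ^2) ^ m := by
    apply pow_le_pow_left₀ (by linarith)
    linarith [Real.add_one_le_exp (32*δ^2)]
  have h2 : Real.exp (32*δ^2) ^ m = Real.exp ((m:ℝ) * (32*δ^2)) := by
    rw [← Real.exp_nat_mul]
  have h3 : (m:ℝ) * (32*δ^2) ≤ 1/5 := by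
    rw [hδ2]
    rw [mul_inv]
    have : (m:ℝ) * (32 * (160⁻¹ * (n:ℝ)⁻¹)) = (m:ℝ) / (n:ℝ) * (1/5) := by ring
    rw [this]
    have hmn : (m:ℝ) / (n:ℝ) ≤ 1 := by
      rw [div_le_one hn0]
      exact hm
    nlinarith
  have h4 : Real.exp ((m:ℝ) * (32*δ^2)) ≤ Real.exp (1/5) := Real.exp_le_exp.2 h3
  have h5 : Real.exp (1/5) ≤ 5/4 := by
    have h := Real.add_one_le_exp (-(1/5))
    rw [Real.exp_neg] at h
    have hpos := Real.exp_pos (1/5)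
    have hinv : Real.exp (1/5) * (Real.exp (1/5))⁻¹ = 1 :=
      mul_inv_cancel₀ (ne_of_gt hpos)
    nlinarith [h, hpos, hinv]
  have hfinal : (1 + 32*δ^2) ^ m - 1 ≤ 1/4 := by
    have := le_trans h1 (le_trans (le_of_eq h2) (le_trans h4 h5))
    linarith
  calc Real.sqrt ((1 + 32*δ^2) ^ m - 1) ≤ Real.sqrt (1/4) := Real.sqrt_le_sqrt hfinal
    _ = 1/2 := by
      rw [show (1/4 : ℝ) = (1/2)^2 by norm_num, Real.sqrt_sq (by norm_num)]



lemma key {n N : ℕ} (hn : 1 ≤ n) (hN : 640 * (n:ℝ) ≤ (N:ℝ))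
    (t : Fin n → Fin N) (H : (Fin n → ℝ) → ℝ) {δ : ℝ}
    (hδ : δ = Real.sqrt ((160*(n:ℝ))⁻¹)) :
    δ / 2 ≤ ∑ s : Bool, ∑ x : Fin N → Bool,
      (2⁻¹ * ∏ j, rho δ (x j)) *
        |sgn s * ((N:ℝ)⁻¹ * ∑ j, sgn (x j)) - H (fun l => sgn s * sgn (x (t l)))| := by
  classical
  -- numeric facts
  have hn0 : (0:ℝ) < n := by exact_mod_cast hn
  have hn1 : (1:ℝ) ≤ n := by exact_mod_cast hn
  have h160 : (0:ℝ) < 160 * (n:ℝ) := by positivity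
  have hδ0 : 0 ≤ δ := hδ ▸ Real.sqrt_nonneg _
  have hδ2 : δ^2 = (160*(n:ℝ))⁻¹ := by rw [hδ, Real.sq_sqrt (le_of_lt (by positivity))]
  have h8 : (160*(n:ℝ))⁻¹ ≤ 1/8 := by
    rw [inv_eq_one_div, div_le_div_iff₀ h160 (by norm_num : (0:ℝ) < 8)]
    nlinarith [hn1]
  have hδ2le : δ^2 ≤ 1/8 := by rw [hδ2]; exact h8
  have hδhalf : δ < 1/2 := by nlinarith [sq_nonneg (δ - 1/2)]
  have hNR : (0:ℝ) < N := by nlinarith [hn1, hN]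
  have hN1 : 1 ≤ N := by exact_mod_cast (by nlinarith [hn1, hN] : (1:ℝ) ≤ (N:ℝ))
  have hw0 : ∀ x : Fin N → Bool, (0:ℝ) ≤ ∏ j, rho δ (x j) :=
    fun x => Finset.prod_nonneg fun j _ =>
      rho_nonneg (by linarith) (le_of_lt hδhalf) (x j)
  have hwb0 : ∀ x : Fin N → Bool, (0:ℝ) ≤ ∏ j, rho (-δ) (x j) :=
    fun x => Finset.prod_nonneg fun j _ =>
      rho_nonneg (by linarith) (by linarith) (x j)
  -- the image of the sample points
  set J : Finset (Fin N) := Finset.image t Finset.univ with hJ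
  have htJ : ∀ l, t l ∈ J := fun l => by
    rw [hJ]; exact Finset.mem_image_of_mem t (Finset.mem_univ l)
  have hcard : (J.card : ℝ) ≤ (n:ℝ) := by
    have h := Finset.card_image_le (s := Finset.univ) (f := t)
    rw [Finset.card_univ, Fintype.card_fin] at h
    have h2 : J.card ≤ n := hJ ▸ h
    exact_mod_cast h2
  -- negation equiv
  have hinv : Function.Involutive (fun (x : Fin N → Bool) => fun j => !(x j)) :=
    fun x => by funext j; simp
  have hnegE : ∀ (x : Fin N → Bool) (j : Fin N), hinv.toPerm _ x j = !(x j) :=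
    fun x j => by rw [Function.Involutive.coe_toPerm]
  -- split the Bool sum in the goal
  rw [Fintype.sum_bool]
  simp only [sgn_true, sgn_false, one_mul, neg_one_mul]
  -- rewrite the s = false part into a reweighted s = true form
  have hpt : ∀ x : Fin N → Bool,
      (2⁻¹ * ∏ j, rho δ (x j)) *
        |-((N:ℝ)⁻¹ * ∑ j, sgn (x j)) - H (fun l => -sgn (x (t l)))|
      = (2⁻¹ * ∏ j, rho (-δ) (hinv.toPerm _ x j)) *
        |((N:ℝ)⁻¹ * ∑ j, sgn (hinv.toPerm _ x j))
          - H (fun l => sgn (hinv.toPerm _ x (t l)))| := by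
    intro x
    have e2 : (∏ j, rho (-δ) (hinv.toPerm _ x j)) = ∏ j, rho δ (x j) :=
      Finset.prod_congr rfl fun j _ => by rw [hnegE, rho_not, neg_neg]
    have e3 : (∑ j, sgn (hinv.toPerm _ x j)) = -∑ j, sgn (x j) := by
      rw [← Finset.sum_neg_distrib]
      exact Finset.sum_congr rfl fun j _ => by rw [hnegE, sgn_not]
    have e4 : (fun l => sgn ((hinv.toPerm _ x) (t l))) = fun l => -sgn (x (t l)) := by
      funext l
      rw [hnegE, sgn_not]
    rw [e2, e3, e4]
    congr 1
    ring
  have hsecond :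
      (∑ x : Fin N → Bool, (2⁻¹ * ∏ j, rho δ (x j)) *
          |-((N:ℝ)⁻¹ * ∑ j, sgn (x j)) - H (fun l => -sgn (x (t l)))|)
      = ∑ x : Fin N → Bool, (2⁻¹ * ∏ j, rho (-δ) (x j)) *
          |((N:ℝ)⁻¹ * ∑ j, sgn (x j)) - H (fun l => sgn (x (t l)))| :=
    Fintype.sum_equiv (hinv.toPerm _) _ _ hpt
  rw [hsecond]
  -- triangle inequality bounds
  have tri1 : (∑ x : Fin N → Bool, (2⁻¹ * ∏ j, rho δ (x j)) *
        |2*δ - H (fun l => sgn (x (t l)))|)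
      ≤ (∑ x : Fin N → Bool, (2⁻¹ * ∏ j, rho δ (x j)) *
          |((N:ℝ)⁻¹ * ∑ j, sgn (x j)) - H (fun l => sgn (x (t l)))|)
        + (∑ x : Fin N → Bool, (2⁻¹ * ∏ j, rho δ (x j)) *
          |((N:ℝ)⁻¹ * ∑ j, sgn (x j)) - 2*δ|) := by
    rw [← Finset.sum_add_distrib]
    refine Finset.sum_le_sum fun x _ => ?_
    have hw : (0:ℝ) ≤ 2⁻¹ * ∏ j, rho δ (x j) := by
      have := hw0 x
      positivity
    have htri : |2*δ - H (fun l => sgn (x (t l)))|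
        ≤ |((N:ℝ)⁻¹ * ∑ j, sgn (x j)) - H (fun l => sgn (x (t l)))|
          + |((N:ℝ)⁻¹ * ∑ j, sgn (x j)) - 2*δ| := by
      have h := abs_add_le (2*δ - ((N:ℝ)⁻¹ * ∑ j, sgn (x j)))
        (((N:ℝ)⁻¹ * ∑ j, sgn (x j)) - H (fun l => sgn (x (t l))))
      rw [show 2*δ - ((N:ℝ)⁻¹ * ∑ j, sgn (x j))
          + (((N:ℝ)⁻¹ * ∑ j, sgn (x j)) - H (fun l => sgn (x (t l))))
          = 2*δ - H (fun l => sgn (x (t l))) by ring] at h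
      rw [abs_sub_comm (2*δ) ((N:ℝ)⁻¹ * ∑ j, sgn (x j))] at h
      linarith
    calc (2⁻¹ * ∏ j, rho δ (x j)) * |2*δ - H (fun l => sgn (x (t l)))|
        ≤ (2⁻¹ * ∏ j, rho δ (x j)) *
            (|((N:ℝ)⁻¹ * ∑ j, sgn (x j)) - H (fun l => sgn (x (t l)))|
              + |((N:ℝ)⁻¹ * ∑ j, sgn (x j)) - 2*δ|) :=
          mul_le_mul_of_nonneg_left htri hw
      _ = _ := by ring
  have tri2 : (∑ x : Fin N → Bool, (2⁻¹ * ∏ j, rho (-δ) (x j)) *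
        |2*δ + H (fun l => sgn (x (t l)))|)
      ≤ (∑ x : Fin N → Bool, (2⁻¹ * ∏ j, rho (-δ) (x j)) *
          |((N:ℝ)⁻¹ * ∑ j, sgn (x j)) - H (fun l => sgn (x (t l)))|)
        + (∑ x : Fin N → Bool, (2⁻¹ * ∏ j, rho (-δ) (x j)) *
          |((N:ℝ)⁻¹ * ∑ j, sgn (x j)) + 2*δ|) := by
    rw [← Finset.sum_add_distrib]
    refine Finset.sum_le_sum fun x _ => ?_
    have hw : (0:ℝ) ≤ 2⁻¹ * ∏ j, rho (-δ) (x j) := by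
      have := hwb0 x
      positivity
    have htri : |2*δ + H (fun l => sgn (x (t l)))|
        ≤ |((N:ℝ)⁻¹ * ∑ j, sgn (x j)) - H (fun l => sgn (x (t l)))|
          + |((N:ℝ)⁻¹ * ∑ j, sgn (x j)) + 2*δ| := by
      have h := abs_add_le (((N:ℝ)⁻¹ * ∑ j, sgn (x j)) + 2*δ)
        (H (fun l => sgn (x (t l))) - ((N:ℝ)⁻¹ * ∑ j, sgn (x j)))
      rw [show ((N:ℝ)⁻¹ * ∑ j, sgn (x j)) + 2*δ
          + (H (fun l => sgn (x (t l))) - ((N:ℝ)⁻¹ * ∑ j, sgn (x j)))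
          = 2*δ + H (fun l => sgn (x (t l))) by ring] at h
      rw [abs_sub_comm (H (fun l => sgn (x (t l)))) ((N:ℝ)⁻¹ * ∑ j, sgn (x j))] at h
      linarith
    calc (2⁻¹ * ∏ j, rho (-δ) (x j)) * |2*δ + H (fun l => sgn (x (t l)))|
        ≤ (2⁻¹ * ∏ j, rho (-δ) (x j)) *
            (|((N:ℝ)⁻¹ * ∑ j, sgn (x j)) - H (fun l => sgn (x (t l)))|
              + |((N:ℝ)⁻¹ * ∑ j, sgn (x j)) + 2*δ|) :=
          mul_le_mul_of_nonneg_left htri hw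
      _ = _ := by ring
  -- factor out the 2⁻¹ in the correction terms
  have hhalf : ∀ u v : (Fin N → Bool) → ℝ,
      (∑ x, (2⁻¹ * u x) * v x) = 2⁻¹ * ∑ x, u x * v x := by
    intro u v
    rw [Finset.mul_sum]
    exact Finset.sum_congr rfl fun x _ => by ring
  -- the second correction term equals the first
  have hptV : ∀ x : Fin N → Bool,
      (∏ j, rho (-δ) (x j)) * |((N:ℝ)⁻¹ * ∑ j, sgn (x j)) + 2*δ|
      = (∏ j, rho δ (hinv.toPerm _ x j)) *
          |((N:ℝ)⁻¹ * ∑ j, sgn (hinv.toPerm _ x j)) - 2*δ| := by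
    intro x
    have e2 : (∏ j, rho δ (hinv.toPerm _ x j)) = ∏ j, rho (-δ) (x j) :=
      Finset.prod_congr rfl fun j _ => by rw [hnegE, rho_not]
    have e3 : (∑ j, sgn (hinv.toPerm _ x j)) = -∑ j, sgn (x j) := by
      rw [← Finset.sum_neg_distrib]
      exact Finset.sum_congr rfl fun j _ => by rw [hnegE, sgn_not]
    rw [e2, e3]
    congr 1
    rw [show (N:ℝ)⁻¹ * -(∑ j, sgn (x j)) - 2*δ
        = -(((N:ℝ)⁻¹ * ∑ j, sgn (x j)) + 2*δ) by ring, abs_neg]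
  have hV2 : (∑ x : Fin N → Bool, (∏ j, rho (-δ) (x j)) *
        |((N:ℝ)⁻¹ * ∑ j, sgn (x j)) + 2*δ|)
      = ∑ x : Fin N → Bool, (∏ j, rho δ (x j)) *
        |((N:ℝ)⁻¹ * ∑ j, sgn (x j)) - 2*δ| :=
    Fintype.sum_equiv (hinv.toPerm _) _ _ hptV
  -- variance bound
  have hVar : (∑ x : Fin N → Bool, (∏ j, rho δ (x j)) *
        |((N:ℝ)⁻¹ * ∑ j, sgn (x j)) - 2*δ|) ≤ Real.sqrt ((N:ℝ)⁻¹) := by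
    have h := variance_bound hN1 hδ0 (le_of_lt hδhalf)
    exact h
  have hVarδ : Real.sqrt ((N:ℝ)⁻¹) ≤ δ/2 := by
    have h1 : (N:ℝ)⁻¹ ≤ (640*(n:ℝ))⁻¹ := inv_anti₀ (by positivity) hN
    have h2 : Real.sqrt ((N:ℝ)⁻¹) ≤ Real.sqrt ((640*(n:ℝ))⁻¹) := Real.sqrt_le_sqrt h1
    have h3 : (640*(n:ℝ))⁻¹ = (160*(n:ℝ))⁻¹ * (1/4) := by
      rw [show (640:ℝ)*(n:ℝ) = (160*(n:ℝ))*4 by ring, mul_inv]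
      ring
    have h4 : Real.sqrt ((640*(n:ℝ))⁻¹) = δ * (1/2) := by
      rw [h3, Real.sqrt_mul (by positivity) (1/4), ← hδ,
        show (1/4:ℝ) = (1/2)^2 by norm_num, Real.sqrt_sq (by norm_num)]
    linarith
  -- marginalization
  have hobs : ∀ x x' : Fin N → Bool, (∀ j ∈ J, x j = x' j) →
      (fun l => sgn (x (t l))) = (fun l => sgn (x' (t l))) :=
    fun x x' h => funext fun l => by rw [h (t l) (htJ l)]
  have marg1 : (∑ x : Fin N → Bool, (∏ j, rho δ (x j)) *
        |2*δ - H (fun l => sgn (x (t l)))|)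
      = ∑ y : {j // j ∈ J} → Bool, (∏ j : {j // j ∈ J}, rho δ (y j)) *
        |2*δ - H (fun l => sgn (if h : t l ∈ J then y ⟨t l, h⟩ else false))| :=
    marginalize J (fun _ => rho δ) (fun j _ => rho_add δ)
      (fun x => |2*δ - H (fun l => sgn (x (t l)))|)
      (fun x x' h => congrArg (fun u => |2*δ - H u|) (hobs x x' h))
  have marg2 : (∑ x : Fin N → Bool, (∏ j, rho (-δ) (x j)) *
        |2*δ + H (fun l => sgn (x (t l)))|)
      = ∑ y : {j // j ∈ J} → Bool, (∏ j : {j // j ∈ J}, rho (-δ) (y j)) *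
        |2*δ + H (fun l => sgn (if h : t l ∈ J then y ⟨t l, h⟩ else false))| :=
    marginalize J (fun _ => rho (-δ)) (fun j _ => rho_add (-δ))
      (fun x => |2*δ + H (fun l => sgn (x (t l)))|)
      (fun x x' h => congrArg (fun u => |2*δ + H u|) (hobs x x' h))
  -- the testing bound on the marginal sums
  have hbracket : 2*δ ≤
      (∑ y : {j // j ∈ J} → Bool, (∏ j : {j // j ∈ J}, rho δ (y j)) *
        |2*δ - H (fun l => sgn (if h : t l ∈ J then y ⟨t l, h⟩ else false))|)
      + ∑ y : {j // j ∈ J} → Bool, (∏ j : {j // j ∈ J}, rho (-δ) (y j)) *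
        |2*δ + H (fun l => sgn (if h : t l ∈ J then y ⟨t l, h⟩ else false))| := by
    have hptmin : ∀ y : {j // j ∈ J} → Bool,
        2*(2*δ)*((∏ j : {j // j ∈ J}, rho δ (y j))
          - |(∏ j : {j // j ∈ J}, rho δ (y j)) - ∏ j : {j // j ∈ J}, rho (-δ) (y j)|)
        ≤ (∏ j : {j // j ∈ J}, rho δ (y j)) *
            |2*δ - H (fun l => sgn (if h : t l ∈ J then y ⟨t l, h⟩ else false))|
          + (∏ j : {j // j ∈ J}, rho (-δ) (y j)) *
            |2*δ + H (fun l => sgn (if h : t l ∈ J then y ⟨t l, h⟩ else false))| := by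
      intro y
      exact pointwise_min _ _ _ _
        (Finset.prod_nonneg fun j _ => rho_nonneg (by linarith) (le_of_lt hδhalf) _)
        (Finset.prod_nonneg fun j _ => rho_nonneg (by linarith) (by linarith) _)
        (by linarith)
    have hsum := Finset.sum_le_sum fun y (_ : y ∈ Finset.univ) => hptmin y
    rw [Finset.sum_add_distrib] at hsum
    have hsump : (∑ y : {j // j ∈ J} → Bool, ∏ j : {j // j ∈ J}, rho δ (y j)) = 1 :=
      sum_w δ
    have htv : (∑ y : {j // j ∈ J} → Bool,
        |(∏ j : {j // j ∈ J}, rho δ (y j)) - ∏ j : {j // j ∈ J}, rho (-δ) (y j)|)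
        ≤ 1/2 := by
      have h := tv_bound (ι := {j // j ∈ J}) hδ0 hδ2le
      have hc : ((Fintype.card {j // j ∈ J} : ℕ) : ℝ) ≤ (n:ℝ) := by
        have : Fintype.card {j // j ∈ J} = J.card := Fintype.card_coe J
        rw [this]
        exact hcard
      exact le_trans h (tv_numeric n (Fintype.card {j // j ∈ J}) hn hc hδ2)
    have hLHS : (∑ y : {j // j ∈ J} → Bool,
        2*(2*δ)*((∏ j : {j // j ∈ J}, rho δ (y j))
          - |(∏ j : {j // j ∈ J}, rho δ (y j)) - ∏ j : {j // j ∈ J}, rho (-δ) (y j)|))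
        = 2*(2*δ)*((∑ y : {j // j ∈ J} → Bool, ∏ j : {j // j ∈ J}, rho δ (y j))
          - ∑ y : {j // j ∈ J} → Bool,
            |(∏ j : {j // j ∈ J}, rho δ (y j)) - ∏ j : {j // j ∈ J}, rho (-δ) (y j)|) := by
      rw [← Finset.mul_sum, Finset.sum_sub_distrib]
    rw [hLHS, hsump] at hsum
    have : 2*δ ≤ 2*(2*δ)*(1 - ∑ y : {j // j ∈ J} → Bool,
        |(∏ j : {j // j ∈ J}, rho δ (y j)) - ∏ j : {j // j ∈ J}, rho (-δ) (y j)|) := by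
      nlinarith [htv, hδ0]
    linarith
  -- put everything together
  have hB1 : (∑ x : Fin N → Bool, (2⁻¹ * ∏ j, rho δ (x j)) *
        |2*δ - H (fun l => sgn (x (t l)))|)
      = 2⁻¹ * ∑ x : Fin N → Bool, (∏ j, rho δ (x j)) *
        |2*δ - H (fun l => sgn (x (t l)))| := hhalf _ _
  have hB2 : (∑ x : Fin N → Bool, (2⁻¹ * ∏ j, rho (-δ) (x j)) *
        |2*δ + H (fun l => sgn (x (t l)))|)
      = 2⁻¹ * ∑ x : Fin N → Bool, (∏ j, rho (-δ) (x j)) *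
        |2*δ + H (fun l => sgn (x (t l)))| := hhalf _ _
  have hC1 : (∑ x : Fin N → Bool, (2⁻¹ * ∏ j, rho δ (x j)) *
        |((N:ℝ)⁻¹ * ∑ j, sgn (x j)) - 2*δ|)
      = 2⁻¹ * ∑ x : Fin N → Bool, (∏ j, rho δ (x j)) *
        |((N:ℝ)⁻¹ * ∑ j, sgn (x j)) - 2*δ| := hhalf _ _
  have hC2 : (∑ x : Fin N → Bool, (2⁻¹ * ∏ j, rho (-δ) (x j)) *
        |((N:ℝ)⁻¹ * ∑ j, sgn (x j)) + 2*δ|)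
      = 2⁻¹ * ∑ x : Fin N → Bool, (∏ j, rho (-δ) (x j)) *
        |((N:ℝ)⁻¹ * ∑ j, sgn (x j)) + 2*δ| := hhalf _ _
  rw [hB1, marg1, hC1] at tri1
  rw [hB2, marg2, hC2] at tri2
  rw [hV2] at hC2
  linarith [tri1, tri2, hbracket, hVar, hVarδ]

lemma perOmega {p : ℝ} (hp1 : 1 ≤ p) {n M N : ℕ} (hn : 1 ≤ n) (hM1 : 1 ≤ M)
    (hN : 640*(n:ℝ) ≤ (N:ℝ)) (t : Fin n → Fin N)
    (φ : (Fin n → (Fin M → ℝ)) → (Fin M → ℝ)) {δ : ℝ}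
    (hδ : δ = Real.sqrt ((160*(n:ℝ))⁻¹)) (hδ0 : 0 ≤ δ) (hδhalf : δ < 1/2) :
    δ/2 ≤ ∑ s : Bool, ∑ x : Fin N → Bool, (2⁻¹ * ∏ j, rho δ (x j)) *
      lpNorm p M ((N:ℝ)⁻¹ • (∑ j, (fun _ : Fin M => sgn s * sgn (x j)))
        - φ (fun l (_ : Fin M) => sgn s * sgn (x (t l)))) := by
  refine le_trans
    (key hn hN t (fun u => (M:ℝ)⁻¹ * ∑ i, φ (fun l _ => u l) i) hδ) ?_
  refine Finset.sum_le_sum fun s _ => Finset.sum_le_sum fun x _ => ?_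
  have hw : (0:ℝ) ≤ 2⁻¹ * ∏ j, rho δ (x j) := by
    have := Finset.prod_nonneg (s := Finset.univ)
      (f := fun j => rho δ (x j))
      (fun j _ => rho_nonneg (by linarith) (le_of_lt hδhalf) (x j))
    positivity
  refine mul_le_mul_of_nonneg_left ?_ hw
  have hvec : ((N:ℝ)⁻¹ • (∑ j, (fun _ : Fin M => sgn s * sgn (x j)))
      - φ (fun l (_ : Fin M) => sgn s * sgn (x (t l))))
      = fun i => (sgn s * ((N:ℝ)⁻¹ * ∑ j, sgn (x j)))
          - φ (fun l (_ : Fin M) => sgn s * sgn (x (t l))) i := by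
    funext i
    simp only [Pi.sub_apply, Pi.smul_apply, Finset.sum_apply, smul_eq_mul]
    rw [← Finset.mul_sum]
    ring
  rw [hvec]
  exact abs_le_lpNorm hp1 hM1 (sgn s * ((N:ℝ)⁻¹ * ∑ j, sgn (x j)))
    (φ (fun l (_ : Fin M) => sgn s * sgn (x (t l))))

end MeanLB

open MeanLB in
/-- For every `2 ≤ p < ∞` there are constants `c₀, c₁ > 0` such
that for all `n, M, N` with `1 ≤ n ≤ c₀·min(M,N)`, every randomized algorithm using
`n` function values for computing the mean `S_N` on `B_∞^N(L_p^M)` has worst-case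
expected error at least `c₁ · n^(−1/2)`: any upper bound `b` for the expected
errors over the unit ball is at least that much. -/
theorem mean_lp_lower_high_sharp (p : ℝ) (hp : 2 ≤ p) :
    ∃ c₀ c₁ : ℝ, 0 < c₀ ∧ 0 < c₁ ∧
      ∀ (n M N : ℕ), 1 ≤ n → (n : ℝ) ≤ c₀ * min (M : ℝ) (N : ℝ) →
        ∀ (Ω : Type) [Fintype Ω] (P : Ω → ℝ),
          (∀ ω, 0 ≤ P ω) → (∑ ω, P ω = 1) →
          ∀ (t : Ω → Fin n → Fin N)
            (φ : Ω → (Fin n → (Fin M → ℝ)) → (Fin M → ℝ)) (b : ℝ),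
            (∀ f : Fin N → Fin M → ℝ, (∀ j, lpNorm p M (f j) ≤ 1) →
              ∑ ω, P ω *
                  lpNorm p M
                    ((N : ℝ)⁻¹ • ∑ j, f j - φ ω (fun l => f (t ω l))) ≤ b) →
            c₁ * (n : ℝ) ^ (-(1 / 2 : ℝ)) ≤ b := by
  refine ⟨(640:ℝ)⁻¹, Real.sqrt ((160:ℝ)⁻¹) / 2, by norm_num,
    by positivity, ?_⟩
  intro n M N hn hmin Ω _ P hP hPsum t φ b hb
  have hp1 : (1:ℝ) ≤ p := by linarith
  have hn0 : (0:ℝ) < n := by exact_mod_cast hn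
  have hn1 : (1:ℝ) ≤ n := by exact_mod_cast hn
  have hminM : min (M:ℝ) (N:ℝ) ≤ (M:ℝ) := min_le_left _ _
  have hminN : min (M:ℝ) (N:ℝ) ≤ (N:ℝ) := min_le_right _ _
  have hMR : 640*(n:ℝ) ≤ (M:ℝ) := by nlinarith
  have hNR : 640*(n:ℝ) ≤ (N:ℝ) := by nlinarith
  have hM1 : 1 ≤ M := by exact_mod_cast (show (1:ℝ) ≤ (M:ℝ) by nlinarith)
  have hN1 : 1 ≤ N := by exact_mod_cast (show (1:ℝ) ≤ (N:ℝ) by nlinarith)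
  have hM0 : (0:ℝ) < M := by exact_mod_cast hM1
  set δ : ℝ := Real.sqrt ((160*(n:ℝ))⁻¹) with hδdef
  have hδ0 : 0 ≤ δ := Real.sqrt_nonneg _
  have hδ2 : δ^2 = (160*(n:ℝ))⁻¹ := Real.sq_sqrt (by positivity)
  have h8 : (160*(n:ℝ))⁻¹ ≤ 1/8 := by
    rw [inv_eq_one_div, div_le_div_iff₀ (by positivity) (by norm_num : (0:ℝ) < 8)]
    nlinarith
  have hδ2le : δ^2 ≤ 1/8 := by rw [hδ2]; exact h8
  have hδhalf : δ < 1/2 := by nlinarith [sq_nonneg (δ - 1/2)]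
  have hw0 : ∀ x : Fin N → Bool, (0:ℝ) ≤ 2⁻¹ * ∏ j, rho δ (x j) := by
    intro x
    have := Finset.prod_nonneg (s := Finset.univ)
      (f := fun j => rho δ (x j))
      (fun j _ => rho_nonneg (by linarith) (le_of_lt hδhalf) (x j))
    positivity
  -- membership in the unit ball
  have hball : ∀ (s : Bool) (x : Fin N → Bool) (j : Fin N),
      lpNorm p M (fun _ : Fin M => sgn s * sgn (x j)) ≤ 1 := by
    intro s x j
    have h1 : |sgn s * sgn (x j)| = 1 := by
      rw [abs_mul, sgn_abs, sgn_abs, mul_one]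
    have : lpNorm p M (fun _ : Fin M => sgn s * sgn (x j)) = 1 := by
      show ((M:ℝ)⁻¹ * ∑ _i : Fin M, |sgn s * sgn (x j)| ^ p) ^ (1/p) = 1
      rw [h1, Real.one_rpow, Finset.sum_const, Finset.card_univ, Fintype.card_fin,
        nsmul_eq_mul, mul_one, inv_mul_cancel₀ (ne_of_gt hM0), Real.one_rpow]
    linarith [this]
  -- apply the averaged hypothesis
  have herr : ∀ (s : Bool) (x : Fin N → Bool),
      (∑ ω, P ω * lpNorm p M ((N:ℝ)⁻¹ • (∑ j, (fun _ : Fin M => sgn s * sgn (x j)))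
        - φ ω (fun l (_ : Fin M) => sgn s * sgn (x (t ω l))))) ≤ b :=
    fun s x => hb (fun j (_ : Fin M) => sgn s * sgn (x j)) (fun j => hball s x j)
  have hsumW : (∑ s : Bool, ∑ x : Fin N → Bool, (2⁻¹ * ∏ j, rho δ (x j))) = 1 := by
    have h1 : (∑ x : Fin N → Bool, (2⁻¹ * ∏ j, rho δ (x j))) = 2⁻¹ := by
      rw [← Finset.mul_sum, sum_w δ, mul_one]
    rw [Fintype.sum_bool, h1]
    norm_num
  have havgb : (∑ s : Bool, ∑ x : Fin N → Bool, (2⁻¹ * ∏ j, rho δ (x j)) *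
      ∑ ω, P ω * lpNorm p M ((N:ℝ)⁻¹ • (∑ j, (fun _ : Fin M => sgn s * sgn (x j)))
        - φ ω (fun l (_ : Fin M) => sgn s * sgn (x (t ω l))))) ≤ b := by
    calc (∑ s : Bool, ∑ x : Fin N → Bool, (2⁻¹ * ∏ j, rho δ (x j)) *
        ∑ ω, P ω * lpNorm p M ((N:ℝ)⁻¹ • (∑ j, (fun _ : Fin M => sgn s * sgn (x j)))
          - φ ω (fun l (_ : Fin M) => sgn s * sgn (x (t ω l)))))
        ≤ ∑ s : Bool, ∑ x : Fin N → Bool, (2⁻¹ * ∏ j, rho δ (x j)) * b := by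
          refine Finset.sum_le_sum fun s _ => Finset.sum_le_sum fun x _ => ?_
          exact mul_le_mul_of_nonneg_left (herr s x) (hw0 x)
      _ = (∑ s : Bool, ∑ x : Fin N → Bool, (2⁻¹ * ∏ j, rho δ (x j))) * b := by
          rw [Finset.sum_mul]
          refine Finset.sum_congr rfl fun s _ => ?_
          rw [Finset.sum_mul]
      _ = b := by rw [hsumW, one_mul]
  -- swap the sums
  have hswap : (∑ s : Bool, ∑ x : Fin N → Bool, (2⁻¹ * ∏ j, rho δ (x j)) *
      ∑ ω, P ω * lpNorm p M ((N:ℝ)⁻¹ • (∑ j, (fun _ : Fin M => sgn s * sgn (x j)))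
        - φ ω (fun l (_ : Fin M) => sgn s * sgn (x (t ω l)))))
      = ∑ ω, P ω * ∑ s : Bool, ∑ x : Fin N → Bool, (2⁻¹ * ∏ j, rho δ (x j)) *
        lpNorm p M ((N:ℝ)⁻¹ • (∑ j, (fun _ : Fin M => sgn s * sgn (x j)))
          - φ ω (fun l (_ : Fin M) => sgn s * sgn (x (t ω l)))) := by
    calc (∑ s : Bool, ∑ x : Fin N → Bool, (2⁻¹ * ∏ j, rho δ (x j)) *
        ∑ ω, P ω * lpNorm p M ((N:ℝ)⁻¹ • (∑ j, (fun _ : Fin M => sgn s * sgn (x j)))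
          - φ ω (fun l (_ : Fin M) => sgn s * sgn (x (t ω l)))))
        = ∑ s : Bool, ∑ x : Fin N → Bool, ∑ ω, (2⁻¹ * ∏ j, rho δ (x j)) *
            (P ω * lpNorm p M ((N:ℝ)⁻¹ • (∑ j, (fun _ : Fin M => sgn s * sgn (x j)))
              - φ ω (fun l (_ : Fin M) => sgn s * sgn (x (t ω l))))) := by
          exact Finset.sum_congr rfl fun s _ => Finset.sum_congr rfl fun x _ =>
            Finset.mul_sum _ _ _
      _ = ∑ s : Bool, ∑ ω, ∑ x : Fin N → Bool, (2⁻¹ * ∏ j, rho δ (x j)) *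
            (P ω * lpNorm p M ((N:ℝ)⁻¹ • (∑ j, (fun _ : Fin M => sgn s * sgn (x j)))
              - φ ω (fun l (_ : Fin M) => sgn s * sgn (x (t ω l))))) := by
          exact Finset.sum_congr rfl fun s _ => Finset.sum_comm
      _ = ∑ ω, ∑ s : Bool, ∑ x : Fin N → Bool, (2⁻¹ * ∏ j, rho δ (x j)) *
            (P ω * lpNorm p M ((N:ℝ)⁻¹ • (∑ j, (fun _ : Fin M => sgn s * sgn (x j)))
              - φ ω (fun l (_ : Fin M) => sgn s * sgn (x (t ω l))))) := Finset.sum_comm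
      _ = ∑ ω, P ω * ∑ s : Bool, ∑ x : Fin N → Bool, (2⁻¹ * ∏ j, rho δ (x j)) *
            lpNorm p M ((N:ℝ)⁻¹ • (∑ j, (fun _ : Fin M => sgn s * sgn (x j)))
              - φ ω (fun l (_ : Fin M) => sgn s * sgn (x (t ω l)))) := by
          refine Finset.sum_congr rfl fun ω _ => ?_
          rw [Finset.mul_sum]
          refine Finset.sum_congr rfl fun s _ => ?_
          rw [Finset.mul_sum]
          exact Finset.sum_congr rfl fun x _ => by ring
  -- lower bound each ω term
  have hkeyω : ∀ ω, δ/2 ≤ ∑ s : Bool, ∑ x : Fin N → Bool, (2⁻¹ * ∏ j, rho δ (x j)) *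
      lpNorm p M ((N:ℝ)⁻¹ • (∑ j, (fun _ : Fin M => sgn s * sgn (x j)))
        - φ ω (fun l (_ : Fin M) => sgn s * sgn (x (t ω l)))) :=
    fun ω => perOmega hp1 hn hM1 hNR (t ω) (φ ω) hδdef hδ0 hδhalf
  have hlow : δ/2 ≤ ∑ ω, P ω * ∑ s : Bool, ∑ x : Fin N → Bool,
      (2⁻¹ * ∏ j, rho δ (x j)) *
        lpNorm p M ((N:ℝ)⁻¹ • (∑ j, (fun _ : Fin M => sgn s * sgn (x j)))
          - φ ω (fun l (_ : Fin M) => sgn s * sgn (x (t ω l)))) := by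
    calc δ/2 = ∑ ω, P ω * (δ/2) := by rw [← Finset.sum_mul, hPsum, one_mul]
      _ ≤ _ := Finset.sum_le_sum fun ω _ =>
          mul_le_mul_of_nonneg_left (hkeyω ω) (hP ω)
  have hδb : δ/2 ≤ b := by
    rw [hswap] at havgb
    linarith
  -- identify δ/2 with c₁ n^{-1/2}
  have hid : δ/2 = (Real.sqrt ((160:ℝ)⁻¹) / 2) * (n:ℝ) ^ (-(1/2 : ℝ)) := by
    have e1 : Real.sqrt ((n:ℝ)⁻¹) = (n:ℝ) ^ (-(1/2 : ℝ)) := by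
      rw [Real.sqrt_eq_rpow, Real.inv_rpow (le_of_lt hn0), ← Real.rpow_neg (le_of_lt hn0)]
    rw [hδdef, mul_inv, Real.sqrt_mul (by norm_num : (0:ℝ) ≤ (160:ℝ)⁻¹) ((n:ℝ)⁻¹), e1]
    ring
  rw [← hid]
  exact hδb
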